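/- Let U : K → B be a right adjoint between categories, let j : A → K be a functor whose codensity monad T_j = Ran_j j exists, and let U_{T_j} : Alg(T_j) → K be the Eilenberg–Moore forgetful functor. Then, assuming the relevant right Kan extensions exist, there is an isomorphism of endofunctors (indeed of monads) Ran_{U ∘ U_{T_j}} (U ∘ U_{T_j}) ≅ Ran_{U ∘ j} (U ∘ j); in other words, the monad on B induced by the composite adjunction (F_{T_j} ∘ F) ⊣ (U ∘ U_{T_j}) is the codensity monad of U ∘ j. -/

import Mathlib

/-! STATEMENT 12: for a right adjoint `U : K ⥤ B` (with left adjoint `F`) and a functor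
`j : A ⥤ K` with codensity monad `T_j`, one has an isomorphism of monads
`Ran_{U ∘ U_{T_j}} (U ∘ U_{T_j}) ≅ Ran_{U ∘ j} (U ∘ j)`; i.e. the monad on `B` induced by
the composite adjunction `(F_{T_j} ∘ F) ⊣ (U ∘ U_{T_j})` is the codensity monad of `U ∘ j`. -/

namespace CategoryTheory

open Functor Limits

noncomputable section

universe w w₂ v v₂ u u₂

namespace Codensity

variable {C : Type u} [Category.{v} C] {D : Type u₂} [Category.{v₂} D]
  (F : C ⥤ D) [F.HasRightKanExtension F]

/-- The underlying endofunctor of the codensity monad of `F`: the right Kan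
extension of `F` along itself. -/
abbrev T : D ⥤ D := F.rightKanExtension F

/-- The counit of the right Kan extension. -/
abbrev ε : F ⋙ T F ⟶ F := F.rightKanExtensionCounit F

/-- The unit of the codensity monad. -/
def unit : 𝟭 D ⟶ T F :=
  (T F).liftOfIsRightKanExtension (ε F) (𝟭 D) F.rightUnitor.hom

/-- The multiplication of the codensity monad. -/
def mul : T F ⋙ T F ⟶ T F :=
  (T F).liftOfIsRightKanExtension (ε F) (T F ⋙ T F)
    ((Functor.associator F (T F) (T F)).inv ≫ whiskerRight (ε F) (T F) ≫ ε F)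

lemma unit_fac (X : C) : (unit F).app (F.obj X) ≫ (ε F).app X = 𝟙 (F.obj X) := by
  simp [unit]

lemma mul_fac (X : C) :
    (mul F).app (F.obj X) ≫ (ε F).app X
      = (T F).map ((ε F).app X) ≫ (ε F).app X := by
  have h := (T F).liftOfIsRightKanExtension_fac_app (ε F)
    (T F ⋙ T F) ((Functor.associator F (T F) (T F)).inv ≫ whiskerRight (ε F) (T F) ≫ ε F) X
  simp only [NatTrans.comp_app, Functor.associator_inv_app, whiskerRight_app,
    Functor.comp_obj, Category.id_comp] at h
  simpa [mul] using h

lemma left_unit' : whiskerLeft (T F) (unit F) ≫ mul F = (T F).rightUnitor.hom := by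
  apply (T F).hom_ext_of_isRightKanExtension (ε F)
  ext X
  have h := (unit F).naturality ((ε F).app X)
  simp only [Functor.comp_obj, Functor.id_obj, Functor.id_map] at h
  simp only [NatTrans.comp_app, whiskerLeft_app, Functor.rightUnitor_hom_app,
    Functor.comp_obj, Functor.id_obj, Category.id_comp, Category.assoc]
  rw [mul_fac, ← Category.assoc, ← h, Category.assoc, unit_fac]
  simp

lemma right_unit' : whiskerRight (unit F) (T F) ≫ mul F = (T F).leftUnitor.hom := by
  apply (T F).hom_ext_of_isRightKanExtension (ε F)
  ext X
  simp only [NatTrans.comp_app, whiskerRight_app, whiskerLeft_app, Functor.leftUnitor_hom_app,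
    Functor.comp_obj, Functor.id_obj, Category.id_comp, Category.assoc]
  rw [mul_fac, ← Category.assoc, ← Functor.map_comp, unit_fac]
  simp

lemma assoc' :
    whiskerRight (mul F) (T F) ≫ mul F
      = (Functor.associator _ _ _).hom ≫ whiskerLeft (T F) (mul F) ≫ mul F := by
  apply (T F).hom_ext_of_isRightKanExtension (ε F)
  ext X
  have h := (mul F).naturality ((ε F).app X)
  simp only [Functor.comp_obj, Functor.comp_map] at h
  simp only [NatTrans.comp_app, whiskerRight_app, whiskerLeft_app, Functor.associator_hom_app,
    Functor.comp_obj, Category.id_comp, Category.assoc]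
  conv_lhs => rw [mul_fac, ← Category.assoc, ← Functor.map_comp, mul_fac, Functor.map_comp,
    Category.assoc]
  conv_rhs => rw [mul_fac, ← Category.assoc, ← h, Category.assoc, mul_fac]

end Codensity

/-- The codensity monad of a functor `F`, defined as the right Kan extension of `F`
along itself, with its canonical monad structure. -/
def codensityMonad {C : Type u} [Category.{v} C] {D : Type u₂} [Category.{v₂} D]
    (F : C ⥤ D) [F.HasRightKanExtension F] : Monad D where
  toFunctor := Codensity.T F
  η := Codensity.unit F
  μ := Codensity.mul F
  left_unit X := by
    simpa using NatTrans.congr_app (Codensity.left_unit' F) X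
  right_unit X := by
    simpa using NatTrans.congr_app (Codensity.right_unit' F) X
  assoc X := by
    simpa using NatTrans.congr_app (Codensity.assoc' F) X

end

end CategoryTheory

universe a' a'' b' b'' k' k''

open CategoryTheory Functor Limits

noncomputable section

namespace CodensityProofAux

open CategoryTheory Functor Limits

variable {C : Type*} [Category C] {D : Type*} [Category D] {H : Type*} [Category H]

lemma isRKE_mk (F' : D ⥤ H) {L : C ⥤ D} {F : C ⥤ H} (α : L ⋙ F' ⟶ F)
    (lift : ∀ (G : D ⥤ H), (L ⋙ G ⟶ F) → (G ⟶ F'))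
    (fac : ∀ (G : D ⥤ H) (β : L ⋙ G ⟶ F), whiskerLeft L (lift G β) ≫ α = β)
    (uniq : ∀ (G : D ⥤ H) (γ₁ γ₂ : G ⟶ F'),
      whiskerLeft L γ₁ ≫ α = whiskerLeft L γ₂ ≫ α → γ₁ = γ₂) :
    F'.IsRightKanExtension α :=
  ⟨⟨IsTerminal.ofUniqueHom
      (fun G => CostructuredArrow.homMk (lift G.left G.hom) (fac G.left G.hom))
      (fun G m => by
        apply CostructuredArrow.hom_ext
        change m.left = lift G.left G.hom
        exact uniq _ _ _ (by rw [fac G.left G.hom]; exact m.w.trans (Category.comp_id _)))⟩⟩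


section AdjRan
variable {B : Type*} [Category B] {L : B ⥤ D} {R : D ⥤ B} (adj : L ⊣ R)

/-- counit exhibiting `L ⋙ R` as the right Kan extension of `R` along `R`. -/
@[simps]
def adjRanCounit : R ⋙ L ⋙ R ⟶ R where
  app d := R.map (adj.counit.app d)
  naturality d d' f := by
    dsimp
    rw [← R.map_comp, ← R.map_comp]
    congr 1
    simpa using adj.counit.naturality f

lemma adjRan_isRKE : (L ⋙ R).IsRightKanExtension (adjRanCounit adj) := by
  refine isRKE_mk _ _
    (fun G β =>
      { app := fun b => G.map (adj.unit.app b) ≫ β.app (L.obj b)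
        naturality := fun b b' f => by
          have hn : f ≫ adj.unit.app b' = adj.unit.app b ≫ R.map (L.map f) := by
            simpa using adj.unit.naturality f
          have hb : G.map (R.map (L.map f)) ≫ β.app (L.obj b') =
              β.app (L.obj b) ≫ R.map (L.map f) := β.naturality (L.map f)
          dsimp
          rw [← Category.assoc, ← G.map_comp, hn, G.map_comp, Category.assoc, hb,
            Category.assoc] })
    (fun G β => ?_) (fun G γ₁ γ₂ h => ?_)
  · ext d
    have hb : G.map (R.map (adj.counit.app d)) ≫ β.app d =
        β.app (L.obj (R.obj d)) ≫ R.map (adj.counit.app d) :=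
      β.naturality (adj.counit.app d)
    dsimp [adjRanCounit]
    rw [Category.assoc, ← hb, ← Category.assoc, ← G.map_comp,
      adj.right_triangle_components, G.map_id, Category.id_comp]
  · have key : ∀ γ : G ⟶ L ⋙ R, ∀ b : B,
        γ.app b = G.map (adj.unit.app b) ≫ γ.app (R.obj (L.obj b)) ≫
          R.map (adj.counit.app (L.obj b)) := by
      intro γ b
      have hn : G.map (adj.unit.app b) ≫ γ.app (R.obj (L.obj b)) =
          γ.app b ≫ R.map (L.map (adj.unit.app b)) := by
        simpa using γ.naturality (adj.unit.app b)
      rw [← Category.assoc, hn, Category.assoc, ← R.map_comp,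
        adj.left_triangle_components, R.map_id]
      simp
    ext b
    rw [key γ₁ b, key γ₂ b]
    have := congrArg (fun t => NatTrans.app t (L.obj b)) h
    dsimp [adjRanCounit] at this
    rw [this]
end AdjRan

section CompRan
variable {A B K : Type*} [Category A] [Category B] [Category K]
  {F : B ⥤ K} {U : K ⥤ B} (adj : F ⊣ U) (j : A ⥤ K) (T : K ⥤ K) (α : j ⋙ T ⟶ j)

/-- counit exhibiting `F ⋙ T ⋙ U` as the right Kan extension of `j ⋙ U` along
`j ⋙ U`, when `(T, α)` is the right Kan extension of `j` along `j` and `F ⊣ U`. -/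
@[simps]
def compRanCounit : (j ⋙ U) ⋙ F ⋙ T ⋙ U ⟶ j ⋙ U where
  app a := U.map (T.map (adj.counit.app (j.obj a)) ≫ α.app a)
  naturality a a' f := by
    have hε : F.map (U.map (j.map f)) ≫ adj.counit.app (j.obj a') =
        adj.counit.app (j.obj a) ≫ j.map f := by
      simpa using adj.counit.naturality (j.map f)
    have hα : T.map (j.map f) ≫ α.app a' = α.app a ≫ j.map f := α.naturality f
    dsimp
    rw [← U.map_comp, ← U.map_comp]
    congr 1
    rw [← Category.assoc, ← T.map_comp, hε, T.map_comp, Category.assoc, hα, Category.assoc]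

variable {j T}

/-- The natural transformation `U ⋙ G ⋙ F ⟶ T` associated with `δ : G ⟶ F ⋙ T ⋙ U`. -/
@[simps]
def psiOf {G : B ⥤ B} (δ : G ⟶ F ⋙ T ⋙ U) : U ⋙ G ⋙ F ⟶ T where
  app k := F.map (δ.app (U.obj k) ≫ U.map (T.map (adj.counit.app k))) ≫
    adj.counit.app (T.obj k)
  naturality k k' g := by
    have hθ : G.map (U.map g) ≫ (δ.app (U.obj k') ≫ U.map (T.map (adj.counit.app k'))) =
        (δ.app (U.obj k) ≫ U.map (T.map (adj.counit.app k))) ≫ U.map (T.map g) := by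
      have h1 : G.map (U.map g) ≫ δ.app (U.obj k') =
          δ.app (U.obj k) ≫ U.map (T.map (F.map (U.map g))) := δ.naturality (U.map g)
      have h2 : F.map (U.map g) ≫ adj.counit.app k' = adj.counit.app k ≫ g := by
        simpa using adj.counit.naturality g
      rw [← Category.assoc, h1, Category.assoc, Category.assoc, ← U.map_comp,
        ← T.map_comp, h2, T.map_comp, U.map_comp]
    have h3 : F.map (U.map (T.map g)) ≫ adj.counit.app (T.obj k') =
        adj.counit.app (T.obj k) ≫ T.map g := by
      simpa using adj.counit.naturality (T.map g)
    dsimp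
    rw [← Category.assoc, ← F.map_comp, ← Category.assoc] at *
    rw [hθ, F.map_comp, Category.assoc, h3, ← Category.assoc]

lemma psiOf_recover {G : B ⥤ B} (δ : G ⟶ F ⋙ T ⋙ U) (b : B) :
    δ.app b = G.map (adj.unit.app b) ≫ adj.unit.app (G.obj (U.obj (F.obj b))) ≫
      U.map ((psiOf adj δ).app (F.obj b)) := by
  have h1 : adj.unit.app (G.obj (U.obj (F.obj b))) ≫
      U.map (F.map (δ.app (U.obj (F.obj b)) ≫ U.map (T.map (adj.counit.app (F.obj b))))) =
      (δ.app (U.obj (F.obj b)) ≫ U.map (T.map (adj.counit.app (F.obj b)))) ≫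
        adj.unit.app (U.obj (T.obj (F.obj b))) := by
    simpa using
      (adj.unit.naturality (δ.app (U.obj (F.obj b)) ≫
        U.map (T.map (adj.counit.app (F.obj b))))).symm
  have h2 : G.map (adj.unit.app b) ≫ δ.app (U.obj (F.obj b)) =
      δ.app b ≫ U.map (T.map (F.map (adj.unit.app b))) := δ.naturality (adj.unit.app b)
  dsimp [psiOf]
  rw [U.map_comp, ← Category.assoc (adj.unit.app _), h1, Category.assoc, Category.assoc,
    adj.right_triangle_components]
  simp only [Functor.comp_obj, Functor.id_obj, Category.comp_id]
  rw [← Category.assoc, h2, Category.assoc, ← U.map_comp, ← T.map_comp,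
    adj.left_triangle_components]
  simp

lemma psiOf_fac {G : B ⥤ B} (δ : G ⟶ F ⋙ T ⋙ U) (a : A) :
    (psiOf adj δ).app (j.obj a) ≫ α.app a =
      F.map (δ.app (U.obj (j.obj a)) ≫ (compRanCounit adj j T α).app a) ≫
        adj.counit.app (j.obj a) := by
  have h1 : F.map (U.map (α.app a)) ≫ adj.counit.app (j.obj a) =
      adj.counit.app (T.obj (j.obj a)) ≫ α.app a := by
    simpa using adj.counit.naturality (α.app a)
  dsimp [psiOf, compRanCounit]
  rw [Category.assoc, ← h1, ← Category.assoc, ← F.map_comp, Category.assoc,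
    ← U.map_comp]

variable [T.IsRightKanExtension α]

/-- Auxiliary lift used to establish the universal property. -/
noncomputable def compRanLift (G : B ⥤ B) (γ : (j ⋙ U) ⋙ G ⟶ j ⋙ U) : U ⋙ G ⋙ F ⟶ T :=
  T.liftOfIsRightKanExtension α (U ⋙ G ⋙ F)
    { app := fun a => F.map (γ.app a) ≫ adj.counit.app (j.obj a)
      naturality := fun a a' f => by
        have h1 : G.map (U.map (j.map f)) ≫ γ.app a' = γ.app a ≫ U.map (j.map f) :=
          γ.naturality f
        have h2 : F.map (U.map (j.map f)) ≫ adj.counit.app (j.obj a') =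
            adj.counit.app (j.obj a) ≫ j.map f := by
          simpa using adj.counit.naturality (j.map f)
        dsimp
        rw [← Category.assoc, ← F.map_comp, h1, F.map_comp, Category.assoc, h2,
          ← Category.assoc] }

lemma compRanLift_fac (G : B ⥤ B) (γ : (j ⋙ U) ⋙ G ⟶ j ⋙ U) (a : A) :
    (compRanLift adj α G γ).app (j.obj a) ≫ α.app a =
      F.map (γ.app a) ≫ adj.counit.app (j.obj a) :=
  T.liftOfIsRightKanExtension_fac_app α _ _ a

/-- The natural transformation giving lifts through `F ⋙ T ⋙ U`. -/
noncomputable def compRanLiftNat (G : B ⥤ B) (γ : (j ⋙ U) ⋙ G ⟶ j ⋙ U) : G ⟶ F ⋙ T ⋙ U where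
  app b := G.map (adj.unit.app b) ≫ adj.unit.app (G.obj (U.obj (F.obj b))) ≫
    U.map ((compRanLift adj α G γ).app (F.obj b))
  naturality b b' f := by
    have h1 : f ≫ adj.unit.app b' = adj.unit.app b ≫ U.map (F.map f) := by
      simpa using adj.unit.naturality f
    have h2 : G.map (U.map (F.map f)) ≫ adj.unit.app (G.obj (U.obj (F.obj b'))) =
        adj.unit.app (G.obj (U.obj (F.obj b))) ≫
          U.map (F.map (G.map (U.map (F.map f)))) := by
      simpa using adj.unit.naturality (G.map (U.map (F.map f)))
    have h3 : F.map (G.map (U.map (F.map f))) ≫ (compRanLift adj α G γ).app (F.obj b') =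
        (compRanLift adj α G γ).app (F.obj b) ≫ T.map (F.map f) :=
      (compRanLift adj α G γ).naturality (F.map f)
    dsimp
    rw [← Category.assoc, ← G.map_comp, h1, G.map_comp, Category.assoc,
      ← Category.assoc (G.map (U.map (F.map f))), h2, Category.assoc, Category.assoc,
      ← U.map_comp, h3, U.map_comp]
    simp

lemma compRan_isRKE : (F ⋙ T ⋙ U).IsRightKanExtension (compRanCounit adj j T α) := by
  refine isRKE_mk _ _ (fun G γ => compRanLiftNat adj α G γ) (fun G γ => ?_)
    (fun G δ₁ δ₂ h => ?_)
  · ext a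
    have hn : F.map (G.map (U.map (adj.counit.app (j.obj a)))) ≫
        (compRanLift adj α G γ).app (j.obj a) =
        (compRanLift adj α G γ).app (F.obj (U.obj (j.obj a))) ≫
          T.map (adj.counit.app (j.obj a)) :=
      (compRanLift adj α G γ).naturality (adj.counit.app (j.obj a))
    have hu : G.map (U.map (adj.counit.app (j.obj a))) ≫
        adj.unit.app (G.obj (U.obj (j.obj a))) =
        adj.unit.app (G.obj (U.obj (F.obj (U.obj (j.obj a))))) ≫
          U.map (F.map (G.map (U.map (adj.counit.app (j.obj a))))) := by
      simpa using adj.unit.naturality (G.map (U.map (adj.counit.app (j.obj a))))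
    have hu2 : γ.app a ≫ adj.unit.app (U.obj (j.obj a)) =
        adj.unit.app (G.obj (U.obj (j.obj a))) ≫ U.map (F.map (γ.app a)) := by
      simpa using adj.unit.naturality (γ.app a)
    dsimp [compRanLiftNat, compRanCounit]
    rw [Category.assoc, Category.assoc, ← U.map_comp,
      ← Category.assoc ((compRanLift adj α G γ).app _), ← hn, Category.assoc,
      compRanLift_fac adj α G γ a]
    rw [U.map_comp, U.map_comp, ← Category.assoc (adj.unit.app _), ← hu]
    simp only [← Category.assoc]
    rw [← G.map_comp, adj.right_triangle_components, G.map_id, Category.id_comp, ← hu2,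
      Category.assoc, adj.right_triangle_components]
    simp
  · have hψ : psiOf adj δ₁ = psiOf adj δ₂ := by
      apply T.hom_ext_of_isRightKanExtension α
      ext a
      have h' := congrArg (fun t => NatTrans.app t a) h
      dsimp at h'
      rw [NatTrans.comp_app, NatTrans.comp_app, whiskerLeft_app, whiskerLeft_app,
        psiOf_fac adj, psiOf_fac adj]
      dsimp
      rw [h']
    ext b
    rw [psiOf_recover adj δ₁ b, psiOf_recover adj δ₂ b, hψ]

end CompRan

section MonadIsoOfRan
variable {A B : Type*} [Category A] [Category B]
  (S : A ⥤ B) [S.HasRightKanExtension S] (M : Monad B)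
  (β : S ⋙ (M : B ⥤ B) ⟶ S) [(M : B ⥤ B).IsRightKanExtension β]

/-- The comparison map from the codensity right Kan extension to `M`. -/
noncomputable def ranHom : S.rightKanExtension S ⟶ (M : B ⥤ B) :=
  (M : B ⥤ B).liftOfIsRightKanExtension β _ (S.rightKanExtensionCounit S)

lemma ranHom_fac :
    whiskerLeft S (ranHom S M β) ≫ β = S.rightKanExtensionCounit S :=
  (M : B ⥤ B).liftOfIsRightKanExtension_fac β _ _

/-- The canonical isomorphism between the chosen right Kan extension and `M`. -/
noncomputable def ranIso : S.rightKanExtension S ≅ (M : B ⥤ B) where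
  hom := ranHom S M β
  inv := (S.rightKanExtension S).liftOfIsRightKanExtension
    (S.rightKanExtensionCounit S) _ β
  hom_inv_id := (S.rightKanExtension S).hom_ext_of_isRightKanExtension
    (S.rightKanExtensionCounit S) _ _ (by simp [ranHom])
  inv_hom_id := (M : B ⥤ B).hom_ext_of_isRightKanExtension β _ _ (by simp [ranHom])

lemma ranHom_unit (hu : ∀ a, M.η.app (S.obj a) ≫ β.app a = 𝟙 (S.obj a)) :
    (codensityMonad S).η ≫ ranHom S M β = M.η := by
  apply (M : B ⥤ B).hom_ext_of_isRightKanExtension β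
  ext a
  have h1 := congrArg (fun t => NatTrans.app t a) (ranHom_fac S M β)
  dsimp [codensityMonad] at h1 ⊢
  rw [Category.assoc, h1, hu a]
  exact Codensity.unit_fac S a

lemma ranHom_mul
    (hm : ∀ a, M.μ.app (S.obj a) ≫ β.app a = (M : B ⥤ B).map (β.app a) ≫ β.app a) :
    (codensityMonad S).μ ≫ ranHom S M β =
      whiskerLeft (S.rightKanExtension S) (ranHom S M β) ≫
        whiskerRight (ranHom S M β) (M : B ⥤ B) ≫ M.μ := by
  apply (M : B ⥤ B).hom_ext_of_isRightKanExtension β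
  ext a
  have h1 := congrArg (fun t => NatTrans.app t a) (ranHom_fac S M β)
  dsimp [codensityMonad] at h1 ⊢
  trans ((S.rightKanExtension S).map ((S.rightKanExtensionCounit S).app a) ≫
    (S.rightKanExtensionCounit S).app a)
  · rw [Category.assoc, h1]
    exact Codensity.mul_fac S a
  · have h2 : (S.rightKanExtension S).map ((S.rightKanExtensionCounit S).app a) ≫
        (ranHom S M β).app (S.obj a) =
        (ranHom S M β).app ((S.rightKanExtension S).obj (S.obj a)) ≫
          (M : B ⥤ B).map ((S.rightKanExtensionCounit S).app a) :=
      (ranHom S M β).naturality ((S.rightKanExtensionCounit S).app a)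
    rw [Category.assoc, Category.assoc, hm a, ← Functor.map_comp_assoc, h1,
      ← Category.assoc, ← h2, Category.assoc, h1]

/-- If `(M, β)` is a right Kan extension of `S` along `S` compatibly with the monad
structure of `M`, then `M` is isomorphic to the codensity monad of `S`. -/
noncomputable def monadIsoOfRan
    (hu : ∀ a, M.η.app (S.obj a) ≫ β.app a = 𝟙 (S.obj a))
    (hm : ∀ a, M.μ.app (S.obj a) ≫ β.app a = (M : B ⥤ B).map (β.app a) ≫ β.app a) :
    (codensityMonad S : Monad B) ≅ M :=
  MonadIso.mk (ranIso S M β)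
    (fun X => congrArg (fun t => NatTrans.app t X) (ranHom_unit S M β hu))
    (fun X => by
      have h2 := congrArg (fun t => NatTrans.app t X) (ranHom_mul S M β hm)
      have h3 : (S.rightKanExtension S).map ((ranHom S M β).app X) ≫
          (ranHom S M β).app ((M : B ⥤ B).obj X) =
          (ranHom S M β).app ((S.rightKanExtension S).obj X) ≫
            (M : B ⥤ B).map ((ranHom S M β).app X) :=
        (ranHom S M β).naturality ((ranHom S M β).app X)
      dsimp [codensityMonad] at h2 ⊢
      rw [show (ranIso S M β).hom = ranHom S M β from rfl, h2, ← Category.assoc, ← h3,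
        Category.assoc])

end MonadIsoOfRan

end CodensityProofAux

theorem codensity_of_composite_with_right_adjoint
    {A : Type a'} [Category.{a''} A] {K : Type k'} [Category.{k''} K]
    {B : Type b'} [Category.{b''} B]
    (F : B ⥤ K) (U : K ⥤ B) (adj : F ⊣ U) (j : A ⥤ K)
    -- the codensity monad of `j` exists, as do the other relevant right Kan extensions:
    [j.HasRightKanExtension j]
    [((codensityMonad j).forget ⋙ U).HasRightKanExtension ((codensityMonad j).forget ⋙ U)]
    [(j ⋙ U).HasRightKanExtension (j ⋙ U)] :
    -- the two codensity monads are isomorphic as monads: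
    Nonempty ((codensityMonad ((codensityMonad j).forget ⋙ U) : Monad B)
        ≅ codensityMonad (j ⋙ U)) ∧
    -- equivalently, the monad induced on `B` by the composite adjunction
    -- `(F_{T_j} ∘ F) ⊣ (U ∘ U_{T_j})` is the codensity monad of `U ∘ j`:
    Nonempty ((adj.comp (codensityMonad j).adj).toMonad ≅ codensityMonad (j ⋙ U)) := by
  classical
  -- `M` is a right Kan extension of `(codensityMonad j).forget ⋙ U` along itself:
  haveI i1 : ((adj.comp (codensityMonad j).adj).toMonad : B ⥤ B).IsRightKanExtension (CodensityProofAux.adjRanCounit (adj.comp (codensityMonad j).adj)) :=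
    CodensityProofAux.adjRan_isRKE (adj.comp (codensityMonad j).adj)
  have hu1 : ∀ d, (adj.comp (codensityMonad j).adj).toMonad.η.app (((codensityMonad j).forget ⋙ U).obj d) ≫
      (CodensityProofAux.adjRanCounit (adj.comp (codensityMonad j).adj)).app d = 𝟙 _ := fun d => by
    have h := (adj.comp (codensityMonad j).adj).right_triangle_components d
    simp at h ⊢
    exact (Category.assoc _ _ _).trans h
  have hm1 : ∀ d, (adj.comp (codensityMonad j).adj).toMonad.μ.app (((codensityMonad j).forget ⋙ U).obj d) ≫
      (CodensityProofAux.adjRanCounit (adj.comp (codensityMonad j).adj)).app d =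
      ((adj.comp (codensityMonad j).adj).toMonad : B ⥤ B).map ((CodensityProofAux.adjRanCounit (adj.comp (codensityMonad j).adj)).app d) ≫
        (CodensityProofAux.adjRanCounit (adj.comp (codensityMonad j).adj)).app d := fun d => by
    have h := congrArg (fun t => ((codensityMonad j).forget ⋙ U).map t)
      ((adj.comp (codensityMonad j).adj).counit.naturality ((adj.comp (codensityMonad j).adj).counit.app d))
    rw [Functor.map_comp, Functor.map_comp] at h
    exact h.symm
  have e1 : (codensityMonad ((codensityMonad j).forget ⋙ U) : Monad B) ≅ (adj.comp (codensityMonad j).adj).toMonad :=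
    CodensityProofAux.monadIsoOfRan ((codensityMonad j).forget ⋙ U)
      (adj.comp (codensityMonad j).adj).toMonad
      (CodensityProofAux.adjRanCounit (adj.comp (codensityMonad j).adj)) hu1 hm1
  -- `M` is also a right Kan extension of `j ⋙ U` along itself:
  haveI i2 : ((adj.comp (codensityMonad j).adj).toMonad : B ⥤ B).IsRightKanExtension
      (CodensityProofAux.compRanCounit adj j ((codensityMonad j).free ⋙ (codensityMonad j).forget)
        (j.rightKanExtensionCounit j)) := by
    haveI : ((codensityMonad j).free ⋙ (codensityMonad j).forget).IsRightKanExtension (j.rightKanExtensionCounit j) :=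
      inferInstanceAs ((j.rightKanExtension j).IsRightKanExtension
        (j.rightKanExtensionCounit j))
    exact CodensityProofAux.compRan_isRKE adj (j.rightKanExtensionCounit j)
  have hu2 : ∀ a, (adj.comp (codensityMonad j).adj).toMonad.η.app ((j ⋙ U).obj a) ≫
      (CodensityProofAux.compRanCounit adj j ((codensityMonad j).free ⋙ (codensityMonad j).forget)
        (j.rightKanExtensionCounit j)).app a = 𝟙 _ := fun a => by
    show (adj.comp (codensityMonad j).adj).unit.app (U.obj (j.obj a)) ≫
      U.map ((j.rightKanExtension j).map (adj.counit.app (j.obj a)) ≫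
        (j.rightKanExtensionCounit j).app a) = 𝟙 _
    rw [Adjunction.comp_unit_app]
    have hn : (codensityMonad j).η.app (F.obj (U.obj (j.obj a))) ≫
        (j.rightKanExtension j).map (adj.counit.app (j.obj a)) =
        adj.counit.app (j.obj a) ≫ (codensityMonad j).η.app (j.obj a) := by
      exact ((codensityMonad j).η.naturality (adj.counit.app (j.obj a))).symm
    have hfac : (codensityMonad j).η.app (j.obj a) ≫ (j.rightKanExtensionCounit j).app a =
        𝟙 (j.obj a) := Codensity.unit_fac j a
    rw [Monad.adj_unit]
    dsimp only
    erw [Category.assoc, ← U.map_comp, ← Category.assoc ((codensityMonad j).η.app _), hn,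
      Category.assoc, hfac]
    simp [adj.right_triangle_components]
  have hm2 : ∀ a, (adj.comp (codensityMonad j).adj).toMonad.μ.app ((j ⋙ U).obj a) ≫
      (CodensityProofAux.compRanCounit adj j ((codensityMonad j).free ⋙ (codensityMonad j).forget)
        (j.rightKanExtensionCounit j)).app a =
      ((adj.comp (codensityMonad j).adj).toMonad : B ⥤ B).map ((CodensityProofAux.compRanCounit adj j ((codensityMonad j).free ⋙ (codensityMonad j).forget)
        (j.rightKanExtensionCounit j)).app a) ≫
      (CodensityProofAux.compRanCounit adj j ((codensityMonad j).free ⋙ (codensityMonad j).forget)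
        (j.rightKanExtensionCounit j)).app a := fun a => by
    simp only [Adjunction.toMonad_μ, whiskerRight_app, whiskerLeft_app,
      Adjunction.comp_counit_app, Monad.adj_counit, Functor.comp_map]
    dsimp [Monad.forget, Monad.free, CodensityProofAux.compRanCounit, codensityMonad]
    erw [← U.map_comp, ← U.map_comp]
    congr 1
    change ((j.rightKanExtension j).map
        (adj.counit.app ((j.rightKanExtension j).obj (F.obj (U.obj (j.obj a))))) ≫
        (Codensity.mul j).app (F.obj (U.obj (j.obj a)))) ≫
        (j.rightKanExtension j).map (adj.counit.app (j.obj a)) ≫ (j.rightKanExtensionCounit j).app a =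
      (j.rightKanExtension j).map (F.map (U.map ((j.rightKanExtension j).map
        (adj.counit.app (j.obj a)) ≫ (j.rightKanExtensionCounit j).app a))) ≫
        (j.rightKanExtension j).map (adj.counit.app (j.obj a)) ≫ (j.rightKanExtensionCounit j).app a
    have h1 : (j.rightKanExtension j).map ((j.rightKanExtension j).map
          (adj.counit.app (j.obj a))) ≫ (Codensity.mul j).app (j.obj a) =
        (Codensity.mul j).app (F.obj (U.obj (j.obj a))) ≫
          (j.rightKanExtension j).map (adj.counit.app (j.obj a)) :=
      (Codensity.mul j).naturality (adj.counit.app (j.obj a))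
    have h2 := Codensity.mul_fac j a
    have h3 : F.map (U.map ((j.rightKanExtension j).map (adj.counit.app (j.obj a)) ≫
          (j.rightKanExtensionCounit j).app a)) ≫ adj.counit.app (j.obj a) =
        adj.counit.app ((j.rightKanExtension j).obj (F.obj (U.obj (j.obj a)))) ≫
          ((j.rightKanExtension j).map (adj.counit.app (j.obj a)) ≫
            (j.rightKanExtensionCounit j).app a) := by
      simpa using adj.counit.naturality ((j.rightKanExtension j).map
        (adj.counit.app (j.obj a)) ≫ (j.rightKanExtensionCounit j).app a)
    rw [Category.assoc, ← Category.assoc ((Codensity.mul j).app _), ← h1, Category.assoc,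
      h2, ← Functor.map_comp_assoc, ← Functor.map_comp_assoc, ← Functor.map_comp_assoc, h3]
    simp [Category.assoc]
  have e2 : (codensityMonad (j ⋙ U) : Monad B) ≅ (adj.comp (codensityMonad j).adj).toMonad :=
    CodensityProofAux.monadIsoOfRan (j ⋙ U) (adj.comp (codensityMonad j).adj).toMonad
      (CodensityProofAux.compRanCounit adj j ((codensityMonad j).free ⋙ (codensityMonad j).forget)
        (j.rightKanExtensionCounit j)) hu2 hm2
  exact ⟨⟨e1 ≪≫ e2.symm⟩, ⟨e2.symm⟩⟩


end
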